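/- Let α and β be positive coprime integers, δ a positive integer, and let z, w be nonzero complex numbers. Let ℓ and k be integers with 0 ≤ ℓ < δ and 0 ≤ k < δ. If z^β = w^β and χ(ℓ/(βδ))·z^{−α} = χ(k/(βδ))·w^{−α}, then ℓ = k. -/

import Mathlib

/-- `χ t = exp(2πit)` -/
noncomputable def χ (t : ℂ) : ℂ := Complex.exp (2 * (Real.pi : ℂ) * Complex.I * t)

/-- if two parameters `z`, `w` produce the same Floquet pair for
indices `ℓ` and `k` in `[0,δ)`, then `ℓ = k`. -/
theorem stmt_7 (α β δ : ℤ) (hα : 0 < α) (hβ : 0 < β) (hcop : IsCoprime α β)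
    (hδ : 0 < δ) (z w : ℂ) (hz : z ≠ 0) (hw : w ≠ 0)
    (ℓ k : ℤ) (hℓ0 : 0 ≤ ℓ) (hℓδ : ℓ < δ) (hk0 : 0 ≤ k) (hkδ : k < δ)
    (h1 : z ^ β = w ^ β)
    (h2 : χ ((ℓ : ℂ) / ((β : ℂ) * (δ : ℂ))) * z ^ (-α)
        = χ ((k : ℂ) / ((β : ℂ) * (δ : ℂ))) * w ^ (-α)) :
    ℓ = k := by
  have hβC : (β : ℂ) ≠ 0 := Int.cast_ne_zero.mpr hβ.ne'
  have hδC : (δ : ℂ) ≠ 0 := Int.cast_ne_zero.mpr hδ.ne'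
  set e : ℂ := 2 * (Real.pi : ℂ) * Complex.I with he
  have heνzero : e ≠ 0 := by
    simpa [he] using Complex.two_pi_I_ne_zero
  -- raise h2 to the β-th power
  have h3 := congrArg (· ^ β) h2
  simp only [mul_zpow] at h3
  have hχ : ∀ m : ℤ, χ ((m : ℂ) / ((β : ℂ) * (δ : ℂ))) ^ β
      = Complex.exp (e * m / δ) := by
    intro m
    rw [χ, ← Complex.exp_int_mul]
    congr 1
    field_simp
    ring
  rw [hχ ℓ, hχ k, ← zpow_mul, ← zpow_mul, mul_comm (-α) β, zpow_mul, zpow_mul, h1] at h3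
  have h4 : Complex.exp (e * ℓ / δ) = Complex.exp (e * k / δ) := by
    have hne : (w ^ β) ^ (-α) ≠ 0 := zpow_ne_zero _ (zpow_ne_zero _ hw)
    exact mul_right_cancel₀ hne h3
  rw [Complex.exp_eq_exp_iff_exists_int] at h4
  obtain ⟨n, hn⟩ := h4
  have hℂ : (ℓ : ℂ) = k + n * δ := by
    have : e * ℓ / δ = e * k / δ + n * e := by simpa [he] using hn
    field_simp at this
    have h5 : e * (ℓ : ℂ) = e * (k + n * δ) := by linear_combination e * this
    exact mul_left_cancel₀ heνzero h5
  have hℤ : ℓ = k + n * δ := by exact_mod_cast hℂ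
  have hn0 : n = 0 := by nlinarith [hℤ]
  subst hn0; simpa using hℤ
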